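/- Let L be a generalized Laplacian on a finite vertex set V and suppose that for some vertex v ∈ V the matrix L^{(v)} (L with its v-th row replaced by all 1's) is invertible. Then for every other vertex u ∈ V the matrix L^{(u)} is also invertible; in fact det(L^{(v)}) = det(L^{(u)}). -/

import Mathlib

open Finset in
private lemma det_updateRow_finset_sum' {V ι : Type*} [Fintype V] [DecidableEq V] [DecidableEq ι]
    (M : Matrix V V ℝ) (j : V) (s : Finset ι) (f : ι → V → ℝ) :
    (M.updateRow j (∑ i ∈ s, f i)).det = ∑ i ∈ s, (M.updateRow j (f i)).det := by
  induction s using Finset.induction_on with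
  | empty =>
      simp only [Finset.sum_empty]
      exact Matrix.det_eq_zero_of_row_eq_zero j (by simp)
  | insert _ _ hk ih =>
      rw [Finset.sum_insert hk, Matrix.det_updateRow_add, ih, Finset.sum_insert hk]

open Finset in
private lemma key_det_eq {V : Type*} [Fintype V] [DecidableEq V] (L : Matrix V V ℝ)
    (hcol : ∀ u : V, ∑ v : V, L v u = 0) {a b : V} (hab : a ≠ b) :
    (L.updateRow a (1 : V → ℝ)).det = (L.updateRow b (1 : V → ℝ)).det := by
  set Ma := L.updateRow a (1 : V → ℝ) with hMa
  have hLb : L b = -∑ w ∈ Finset.univ.erase b, L w := by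
    funext c
    have h1 : L b c + ∑ w ∈ Finset.univ.erase b, L w c = 0 := by
      have h0 := hcol c
      rw [← Finset.add_sum_erase _ _ (Finset.mem_univ b)] at h0
      exact h0
    have : (∑ w ∈ Finset.univ.erase b, L w) c = ∑ w ∈ Finset.univ.erase b, L w c :=
      Finset.sum_apply _ _ _
    simp only [Pi.neg_apply, this]
    linarith
  have hrow : Ma b = L b := Matrix.updateRow_ne (Ne.symm hab)
  have step1 : Ma.det = -(Ma.updateRow b (L a)).det := by
    calc Ma.det = (Ma.updateRow b (Ma b)).det := by rw [Matrix.updateRow_eq_self]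
    _ = (Ma.updateRow b (-∑ w ∈ Finset.univ.erase b, L w)).det := by rw [hrow, hLb]
    _ = -(Ma.updateRow b (∑ w ∈ Finset.univ.erase b, L w)).det := by
        have : (-∑ w ∈ Finset.univ.erase b, L w)
            = (-1 : ℝ) • ∑ w ∈ Finset.univ.erase b, L w := by simp
        rw [this, Matrix.det_updateRow_smul]; ring
    _ = -∑ w ∈ Finset.univ.erase b, (Ma.updateRow b (L w)).det := by
        exact congrArg Neg.neg (det_updateRow_finset_sum' Ma b _ (fun w => L w))
    _ = -(Ma.updateRow b (L a)).det := by
        congr 1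
        rw [Finset.sum_eq_single a]
        · intro w hw hwa
          have hwb : w ≠ b := Finset.ne_of_mem_erase hw
          refine Matrix.det_zero_of_row_eq hwb ?_
          rw [Matrix.updateRow_ne hwb, Matrix.updateRow_self, hMa,
            Matrix.updateRow_ne hwa]
        · intro ha; exact absurd (Finset.mem_erase.mpr ⟨hab, Finset.mem_univ a⟩) ha
  have step2 : (L.updateRow b (1 : V → ℝ)).det = -(Ma.updateRow b (L a)).det := by
    have hC : (Ma.updateRow b (L a)).submatrix (Equiv.swap a b) id
        = L.updateRow b (1 : V → ℝ) := by
      ext i j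
      rcases eq_or_ne i a with rfl | hia
      · simp [Equiv.swap_apply_left, Matrix.updateRow_self, Matrix.updateRow_ne hab]
      · rcases eq_or_ne i b with rfl | hib
        · simp [Equiv.swap_apply_right, hMa, Matrix.updateRow_ne hab.symm,
            Matrix.updateRow_self, Matrix.updateRow_ne hab]
        · simp [Equiv.swap_apply_of_ne_of_ne hia hib, hMa,
            Matrix.updateRow_ne hib, Matrix.updateRow_ne hia]
    have := Matrix.det_permute (Equiv.swap a b) (Ma.updateRow b (L a))
    rw [hC] at this
    rw [this, Equiv.Perm.sign_swap hab]
    push_cast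
    ring
  rw [step1, step2]

/-- For a generalized Laplacian `L` (a real matrix all of whose columns sum to
zero), if `L` with its `v`-row replaced by all ones is invertible for some `v`,
then the same holds for every row `u`; in fact all these determinants agree. -/
theorem stmt4 {V : Type*} [Fintype V] [DecidableEq V] (L : Matrix V V ℝ)
    (hcol : ∀ u : V, ∑ v : V, L v u = 0) (v : V)
    (h : IsUnit (L.updateRow v (1 : V → ℝ)).det) :
    ∀ u : V, IsUnit (L.updateRow u (1 : V → ℝ)).det ∧
      (L.updateRow v (1 : V → ℝ)).det = (L.updateRow u (1 : V → ℝ)).det := by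
  intro u
  rcases eq_or_ne v u with rfl | hvu
  · exact ⟨h, rfl⟩
  · have heq := key_det_eq L hcol hvu
    exact ⟨heq ▸ h, heq⟩
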